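/- Let A11 be a k×k matrix, A12 a k×m matrix, A21 an m×k matrix and A22 an m×m matrix over ℝ≥0∞, and let A be the (k+m)×(k+m) block matrix with blocks A11, A12, A21, A22. Set D := A22 + A21·A11*·A12. Then the closure of A is the block matrix whose blocks are: top-left A11* + A11*·A12·D*·A21·A11*, top-right A11*·A12·D*, bottom-left D*·A21·A11*, and bottom-right D*. -/

import Mathlib

set_option linter.unusedSectionVars false
open scoped ENNReal
open Matrix

noncomputable def matrixClosure {p : Type*} [Fintype p] [DecidableEq p]
    (M : Matrix p p ℝ≥0∞) : Matrix p p ℝ≥0∞ :=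
  ∑' k : ℕ, M ^ k

section helpers
variable {p q : Type*} [Fintype p] [DecidableEq p] [Fintype q]

lemma mtsum_apply (f : ℕ → Matrix p q ℝ≥0∞) (i : p) (j : q) :
    (∑' n, f n) i j = ∑' n, f n i j := by
  erw [tsum_apply (Pi.summable.2 fun _ => Pi.summable.2 fun _ => ENNReal.summable),
    tsum_apply (Pi.summable.2 fun _ => ENNReal.summable)]

lemma mtsum_mul (f : ℕ → Matrix p p ℝ≥0∞) (c : Matrix p q ℝ≥0∞) (i : p) (j : q) :
    ((∑' n, f n) * c) i j = ∑' n, (f n * c) i j := by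
  simp only [Matrix.mul_apply, mtsum_apply, ← ENNReal.tsum_mul_right]
  exact (Summable.tsum_finsetSum fun _ _ => ENNReal.summable).symm

lemma mtsum_mul_left (M : Matrix p p ℝ≥0∞) (f : ℕ → Matrix p q ℝ≥0∞) (i : p) (j : q) :
    (M * (∑' n, f n)) i j = ∑' n, (M * f n) i j := by
  simp only [Matrix.mul_apply, mtsum_apply, ← ENNReal.tsum_mul_left]
  exact (Summable.tsum_finsetSum fun _ _ => ENNReal.summable).symm

lemma closure_unfold (M : Matrix p p ℝ≥0∞) :
    matrixClosure M = 1 + M * matrixClosure M := by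
  ext i j
  rw [Matrix.add_apply, matrixClosure, mtsum_apply,
    tsum_eq_zero_add' ENNReal.summable, pow_zero]
  congr 1
  rw [mtsum_mul_left]
  congr 1; ext n; rw [← pow_succ']

lemma mul_mono {r : Type*} [Fintype r] (M : Matrix p r ℝ≥0∞) {x y : Matrix r q ℝ≥0∞}
    (h : ∀ i j, x i j ≤ y i j) (i : p) (j : q) : (M * x) i j ≤ (M * y) i j := by
  simp only [Matrix.mul_apply]
  exact Finset.sum_le_sum fun k _ => mul_le_mul_right (h k j) _

lemma closure_mul_le (M : Matrix p p ℝ≥0∞) (c x : Matrix p q ℝ≥0∞)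
    (h : ∀ i j, c i j + (M * x) i j ≤ x i j) (i : p) (j : q) :
    (matrixClosure M * c) i j ≤ x i j := by
  have key : ∀ N : ℕ, ∀ i j, ((∑ n ∈ Finset.range N, M ^ n) * c) i j ≤ x i j := by
    intro N
    induction N with
    | zero => simp
    | succ N ih =>
      intro i j
      rw [geom_sum_succ, Matrix.add_mul, Matrix.one_mul, Matrix.mul_assoc, Matrix.add_apply]
      calc (M * ((∑ n ∈ Finset.range N, M ^ n) * c)) i j + c i j
          ≤ (M * x) i j + c i j := add_le_add_left (mul_mono M ih i j) _
        _ ≤ x i j := by rw [add_comm]; exact h i j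
  rw [matrixClosure, mtsum_mul]
  refine tsum_le_of_sum_le' zero_le fun s => ?_
  obtain ⟨N, hN⟩ := s.exists_nat_subset_range
  calc ∑ n ∈ s, (M ^ n * c) i j
      ≤ ∑ n ∈ Finset.range N, (M ^ n * c) i j := Finset.sum_le_sum_of_subset hN
    _ = ((∑ n ∈ Finset.range N, M ^ n) * c) i j := by rw [Matrix.sum_mul, Matrix.sum_apply]
    _ ≤ x i j := key N i j

lemma closure_le_of_fixpoint (M x : Matrix p p ℝ≥0∞)
    (h : x = 1 + M * x) (i j : p) : matrixClosure M i j ≤ x i j := by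
  have := closure_mul_le M 1 x (fun i j => by
    conv_rhs => rw [h]
    rw [Matrix.add_apply]) i j
  rwa [Matrix.mul_one] at this

end helpers

theorem block_matrix_closure (k m : ℕ)
    (A11 : Matrix (Fin k) (Fin k) ℝ≥0∞) (A12 : Matrix (Fin k) (Fin m) ℝ≥0∞)
    (A21 : Matrix (Fin m) (Fin k) ℝ≥0∞) (A22 : Matrix (Fin m) (Fin m) ℝ≥0∞)
    (D : Matrix (Fin m) (Fin m) ℝ≥0∞)
    (hD : D = A22 + A21 * matrixClosure A11 * A12) :
    matrixClosure (Matrix.fromBlocks A11 A12 A21 A22) =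
      Matrix.fromBlocks
        (matrixClosure A11 +
          matrixClosure A11 * A12 * matrixClosure D * A21 * matrixClosure A11)
        (matrixClosure A11 * A12 * matrixClosure D)
        (matrixClosure D * A21 * matrixClosure A11)
        (matrixClosure D) := by
  set a := matrixClosure A11 with ha_def
  set d := matrixClosure D with hd_def
  set A := Matrix.fromBlocks A11 A12 A21 A22 with hA_def
  have ha : a = 1 + A11 * a := closure_unfold A11
  have hd : d = 1 + D * d := closure_unfold D
  -- the candidate, fully right-associated
  set u : Matrix (Fin k) (Fin k) ℝ≥0∞ := A12 * (d * (A21 * a)) with hu_def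
  set P0 := a + a * u with hP0_def
  set Q0 := a * (A12 * d) with hQ0_def
  set R0 := d * (A21 * a) with hR0_def
  set C := Matrix.fromBlocks P0 Q0 R0 d with hC_def
  -- block equations for C
  have e1 : P0 = 1 + (A11 * P0 + A12 * R0) := by
    have : A12 * R0 = u := hu_def.symm
    rw [this, hP0_def]
    conv_lhs => rw [ha]
    simp only [Matrix.mul_add, Matrix.add_mul, Matrix.one_mul, Matrix.mul_assoc]
    abel
  have e2 : Q0 = 0 + (A11 * Q0 + A12 * d) := by
    rw [hQ0_def, zero_add]
    conv_lhs => rw [ha]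
    simp only [Matrix.add_mul, Matrix.one_mul, Matrix.mul_assoc]
    abel
  have e3 : R0 = 0 + (A21 * P0 + A22 * R0) := by
    rw [zero_add, hP0_def]
    conv_lhs => rw [hR0_def, hd]
    rw [hD]
    simp only [Matrix.mul_add, Matrix.add_mul, Matrix.one_mul, Matrix.mul_assoc, hu_def,
      hR0_def]
    abel
  have e4 : d = 1 + (A21 * Q0 + A22 * d) := by
    conv_lhs => rw [hd]
    rw [hD, hQ0_def]
    simp only [Matrix.mul_add, Matrix.add_mul, Matrix.one_mul, Matrix.mul_assoc]
    abel
  have hC : C = 1 + A * C := by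
    rw [hC_def, hA_def, Matrix.fromBlocks_multiply, ← Matrix.fromBlocks_one,
      Matrix.fromBlocks_add]
    rw [← e1, ← e2, ← e3, ← e4]
  -- blocks of the closure of A
  have hA : matrixClosure A = 1 + A * matrixClosure A := closure_unfold A
  set P := (matrixClosure A).toBlocks₁₁ with hP_def
  set Q := (matrixClosure A).toBlocks₁₂ with hQ_def
  set R := (matrixClosure A).toBlocks₂₁ with hR_def
  set S := (matrixClosure A).toBlocks₂₂ with hS_def
  have hE : Matrix.fromBlocks P Q R S = matrixClosure A := by
    rw [hP_def, hQ_def, hR_def, hS_def, Matrix.fromBlocks_toBlocks]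
  have hblocks : Matrix.fromBlocks P Q R S =
      Matrix.fromBlocks (1 + (A11 * P + A12 * R)) (0 + (A11 * Q + A12 * S))
        (0 + (A21 * P + A22 * R)) (1 + (A21 * Q + A22 * S)) := by
    conv_lhs => rw [hE, hA, ← hE]
    rw [hA_def, Matrix.fromBlocks_multiply, ← Matrix.fromBlocks_one, Matrix.fromBlocks_add]
  have eP : P = 1 + (A11 * P + A12 * R) := by
    have := congrArg Matrix.toBlocks₁₁ hblocks
    simpa using this
  have eQ : Q = A11 * Q + A12 * S := by
    have := congrArg Matrix.toBlocks₁₂ hblocks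
    simpa using this
  have eR : R = A21 * P + A22 * R := by
    have := congrArg Matrix.toBlocks₂₁ hblocks
    simpa using this
  have eS : S = 1 + (A21 * Q + A22 * S) := by
    have := congrArg Matrix.toBlocks₂₂ hblocks
    simpa using this
  -- C ≤ closure blockwise
  have hQ1 : ∀ i j, (a * (A12 * S)) i j ≤ Q i j := by
    refine closure_mul_le A11 (A12 * S) Q fun i j => ?_
    conv_rhs => rw [eQ]
    rw [Matrix.add_apply, add_comm]
  have hDS' : ∀ i j, (D * S) i j ≤ (A21 * Q + A22 * S) i j := by
    intro i j
    calc (D * S) i j = (A21 * (a * (A12 * S))) i j + (A22 * S) i j := by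
          rw [hD]
          simp only [Matrix.add_mul, Matrix.mul_assoc, Matrix.add_apply]
          ring
      _ ≤ (A21 * Q) i j + (A22 * S) i j := add_le_add_left (mul_mono A21 hQ1 i j) _
      _ = (A21 * Q + A22 * S) i j := (Matrix.add_apply _ _ _ _).symm
  have hS1 : ∀ i j, d i j ≤ S i j := by
    intro i j
    have h := closure_mul_le D 1 S (fun i j => by
      conv_rhs => rw [eS]
      rw [Matrix.add_apply]
      exact add_le_add_right (hDS' i j) _) i j
    rwa [Matrix.mul_one] at h
  have hQ2 : ∀ i j, Q0 i j ≤ Q i j := by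
    intro i j
    calc Q0 i j ≤ (a * (A12 * S)) i j :=
          mul_mono a (fun i j => mul_mono A12 hS1 i j) i j
      _ ≤ Q i j := hQ1 i j
  have hP1 : ∀ i j, ((a * (1 + A12 * R) : Matrix (Fin k) (Fin k) ℝ≥0∞)) i j ≤ P i j := by
    refine closure_mul_le A11 (1 + A12 * R) P fun i j => ?_
    conv_rhs => rw [eP]
    simp only [Matrix.add_apply]
    exact le_of_eq (by ring)
  have hP1' : ∀ i j, (a + a * (A12 * R)) i j ≤ P i j := by
    intro i j
    have : a + a * (A12 * R) = a * (1 + A12 * R) := by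
      rw [Matrix.mul_add, Matrix.mul_one]
    rw [this]; exact hP1 i j
  have hR1 : ∀ i j, R0 i j ≤ R i j := by
    refine closure_mul_le D (A21 * a) R fun i j => ?_
    have hDR : (D * R) i j = (A22 * R) i j + (A21 * (a * (A12 * R))) i j := by
      rw [hD]
      simp only [Matrix.add_mul, Matrix.mul_assoc, Matrix.add_apply]
    calc (A21 * a) i j + (D * R) i j
        = (A21 * (a + a * (A12 * R))) i j + (A22 * R) i j := by
          rw [hDR, Matrix.mul_add, Matrix.add_apply]
          ring
      _ ≤ (A21 * P) i j + (A22 * R) i j :=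
          add_le_add_left (mul_mono A21 hP1' i j) _
      _ = R i j := by
          conv_rhs => rw [eR]
          rw [Matrix.add_apply]
  have hP2 : ∀ i j, P0 i j ≤ P i j := by
    intro i j
    have hu2 : ∀ i j, (a * u) i j ≤ (a * (A12 * R)) i j := by
      intro i j
      refine mul_mono a (fun i j => ?_) i j
      rw [hu_def]
      exact mul_mono A12 (fun i j => hR1 i j) i j
    calc P0 i j = a i j + (a * u) i j := by rw [hP0_def, Matrix.add_apply]
      _ ≤ a i j + (a * (A12 * R)) i j := add_le_add_right (hu2 i j) _
      _ = (a + a * (A12 * R)) i j := by rw [Matrix.add_apply]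
      _ ≤ P i j := hP1' i j
  -- combine
  have main : matrixClosure A = C := by
    ext i j
    refine le_antisymm (closure_le_of_fixpoint A C hC i j) ?_
    have hM : matrixClosure A = Matrix.fromBlocks P Q R S := by
      rw [hP_def, hQ_def, hR_def, hS_def, Matrix.fromBlocks_toBlocks]
    rw [hM, hC_def]
    cases i with
    | inl i => cases j with
      | inl j => simpa using hP2 i j
      | inr j => simpa using hQ2 i j
    | inr i => cases j with
      | inl j => simpa using hR1 i j
      | inr j => simpa using hS1 i j
  rw [main, hC_def, hP0_def, hQ0_def, hR0_def, hu_def, hR0_def]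
  simp only [Matrix.mul_assoc]
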